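/- Under the hypotheses of the eigenphase-derivative formula, the derivative θ'(k) satisfies l_min - 2/λ⁺_min ≤ θ'(k) ≤ l_max + 2/λ⁻_min, where l_min, l_max are the smallest and largest edge lengths, λ⁺_min = min{λ ∈ σ(L) : λ > 0} (∞ if none), and λ⁻_min = min{|λ| : λ ∈ σ(L), λ < 0} (∞ if none). In particular, if l_min > 2/λ⁺_min then θ'(k) > 0 for all k. -/

import Mathlib

open Matrix

/-- bounds on the eigenphase derivative
θ'(k) = Σᵢ lᵢ|vᵢ|² - 2⟨v, (L/(L²+k²))v⟩:
l_min - 2/λ⁺_min ≤ θ'(k) ≤ l_max + 2/λ⁻_min, and θ'(k) > 0 if l_min > 2/λ⁺_min. -/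
theorem stmt_14 (E : ℕ)
    (L : Matrix (Fin E ⊕ Fin E) (Fin E ⊕ Fin E) ℂ) (hL : L.IsHermitian)
    (ld : Fin E → ℝ) (lmin lmax : ℝ)
    (hmin : ∀ j, lmin ≤ ld j) (hmax : ∀ j, ld j ≤ lmax)
    (lp lm : ℝ) (hlp : 0 < lp) (hlm : 0 < lm)
    (hp : ∀ μ : ℝ, (μ : ℂ) ∈ spectrum ℂ L → 0 < μ → lp ≤ μ)
    (hm : ∀ μ : ℝ, (μ : ℂ) ∈ spectrum ℂ L → μ < 0 → lm ≤ -μ)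
    (k : ℝ) (hk : k ≠ 0)
    (v : (Fin E ⊕ Fin E) → ℂ) (hv : ∑ i, Complex.normSq (v i) = 1)
    (θ' : ℝ)
    (hθ' : (θ' : ℂ) = (∑ i, ((Sum.elim ld ld i : ℝ) : ℂ) * (Complex.normSq (v i) : ℂ))
      - 2 * (star v ⬝ᵥ ((L * (L^2 + ((k : ℂ)^2) • 1)⁻¹) *ᵥ v))) :
    (lmin - 2 / lp ≤ θ' ∧ θ' ≤ lmax + 2 / lm) ∧ (2 / lp < lmin → 0 < θ') := by
  classical
  let n := (Fin E ⊕ Fin E)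
  set μ : n → ℝ := hL.eigenvalues with hμdef
  set U : Matrix n n ℂ := (hL.eigenvectorUnitary : Matrix n n ℂ) with hUdef
  have hUmem : U ∈ Matrix.unitaryGroup n ℂ := hL.eigenvectorUnitary.2
  have hU1 : U * star U = 1 := (Matrix.mem_unitaryGroup_iff).mp hUmem
  have hU1' : star U * U = 1 := (Matrix.mem_unitaryGroup_iff').mp hUmem
  have hspec : L = U * diagonal (fun i => (μ i : ℂ)) * star U := by
    exact hL.spectral_theorem
  have hden : ∀ i, (0:ℝ) < μ i ^ 2 + k ^ 2 := fun i => by positivity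
  have hdenC : ∀ i, ((μ i : ℂ)^2 + (k : ℂ)^2) ≠ 0 := by
    intro i
    have h1 : ((μ i : ℂ)^2 + (k : ℂ)^2) = ((μ i ^ 2 + k ^ 2 : ℝ) : ℂ) := by push_cast; ring
    rw [h1]
    exact_mod_cast (hden i).ne'
  set g : n → ℝ := fun i => μ i / (μ i ^ 2 + k ^ 2) with hgdef
  have hsc : ((k:ℂ)^2) • (1 : Matrix n n ℂ) = diagonal (fun _ => (k:ℂ)^2) := by
    ext i j
    by_cases h : i = j <;> simp [h, Matrix.one_apply, Matrix.diagonal_apply]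
  have hA : L^2 + ((k:ℂ)^2) • (1 : Matrix n n ℂ)
      = U * diagonal (fun i => (μ i : ℂ)^2 + (k:ℂ)^2) * star U := by
    have h2 : L^2 = U * diagonal (fun i => (μ i : ℂ)^2) * star U := by
      rw [hspec]
      have e : (U * diagonal (fun i => (μ i : ℂ)) * star U) * (U * diagonal (fun i => (μ i : ℂ)) * star U)
          = U * (diagonal (fun i => (μ i : ℂ)) * (star U * U) * diagonal (fun i => (μ i : ℂ))) * star U := by
        simp only [Matrix.mul_assoc]
      rw [pow_two, e, hU1', Matrix.mul_one, Matrix.diagonal_mul_diagonal]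
      congr 2
      ext i
      ring
    have h3 : ((k:ℂ)^2) • (1 : Matrix n n ℂ) = U * diagonal (fun _ => (k:ℂ)^2) * star U := by
      rw [← hsc, mul_smul_comm, mul_one, smul_mul_assoc, hU1]
    rw [h2, h3, ← Matrix.add_mul, ← Matrix.mul_add, Matrix.diagonal_add]
  have hAinv : (L^2 + ((k:ℂ)^2) • (1 : Matrix n n ℂ))⁻¹
      = U * diagonal (fun i => ((μ i : ℂ)^2 + (k:ℂ)^2)⁻¹) * star U := by
    apply Matrix.inv_eq_right_inv
    rw [hA]
    have e : (U * diagonal (fun i => (μ i : ℂ)^2 + (k:ℂ)^2) * star U)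
        * (U * diagonal (fun i => ((μ i : ℂ)^2 + (k:ℂ)^2)⁻¹) * star U)
        = U * (diagonal (fun i => (μ i : ℂ)^2 + (k:ℂ)^2) * (star U * U)
            * diagonal (fun i => ((μ i : ℂ)^2 + (k:ℂ)^2)⁻¹)) * star U := by
      simp only [Matrix.mul_assoc]
    rw [e, hU1', Matrix.mul_one, Matrix.diagonal_mul_diagonal]
    have : (fun i => ((μ i : ℂ)^2 + (k:ℂ)^2) * ((μ i : ℂ)^2 + (k:ℂ)^2)⁻¹) = fun _ => (1:ℂ) := by
      ext i
      exact mul_inv_cancel₀ (hdenC i)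
    rw [this, Matrix.diagonal_one, Matrix.mul_one, hU1]
  have hM : L * (L^2 + ((k:ℂ)^2) • (1 : Matrix n n ℂ))⁻¹
      = U * diagonal (fun i => ((g i : ℝ) : ℂ)) * star U := by
    rw [hAinv]
    conv_lhs => rw [hspec]
    have e : (U * diagonal (fun i => (μ i : ℂ)) * star U)
        * (U * diagonal (fun i => ((μ i : ℂ)^2 + (k:ℂ)^2)⁻¹) * star U)
        = U * (diagonal (fun i => (μ i : ℂ)) * (star U * U)
            * diagonal (fun i => ((μ i : ℂ)^2 + (k:ℂ)^2)⁻¹)) * star U := by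
      simp only [Matrix.mul_assoc]
    rw [e, hU1', Matrix.mul_one, Matrix.diagonal_mul_diagonal]
    have hfun : (fun i => (μ i : ℂ) * ((μ i : ℂ)^2 + (k:ℂ)^2)⁻¹) = fun i => ((g i : ℝ) : ℂ) := by
      funext i
      simp only [hgdef]
      push_cast
      ring
    rw [hfun]
  -- the transformed vector
  set w : n → ℂ := star U *ᵥ v with hwdef
  have hsw : star w = star v ᵥ* U := by
    rw [hwdef, Matrix.star_mulVec]
    congr 1
    rw [Matrix.star_eq_conjTranspose, Matrix.conjTranspose_conjTranspose]
  have hmem : ∀ i, ((μ i : ℝ) : ℂ) ∈ spectrum ℂ L := by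
    intro i
    have h := hL.eigenvalues_mem_spectrum_real i
    simpa using spectrum.algebraMap_mem ℂ h
  have hdot : ∀ (u : (Fin E ⊕ Fin E) → ℂ),
      star u ⬝ᵥ u = ((∑ i, Complex.normSq (u i) : ℝ) : ℂ) := by
    intro u
    simp only [dotProduct, Pi.star_apply, Complex.ofReal_sum]
    refine Finset.sum_congr rfl fun i _ => ?_
    rw [mul_comm, Complex.star_def, Complex.mul_conj]
  have hw1 : ∑ i, Complex.normSq (w i) = 1 := by
    have h1 : star w ⬝ᵥ w = ((1:ℝ):ℂ) := by
      rw [hsw, ← Matrix.dotProduct_mulVec, hwdef, Matrix.mulVec_mulVec, hU1,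
        Matrix.one_mulVec, hdot v, hv]
    rw [hdot w] at h1
    exact_mod_cast h1
  have hQC : star v ⬝ᵥ ((L * (L^2 + ((k:ℂ)^2) • 1)⁻¹) *ᵥ v)
      = ((∑ i, g i * Complex.normSq (w i) : ℝ) : ℂ) := by
    rw [hM, ← Matrix.mulVec_mulVec, ← Matrix.mulVec_mulVec, Matrix.dotProduct_mulVec, ← hsw,
      ← hwdef]
    simp only [dotProduct, Matrix.mulVec_diagonal, Pi.star_apply, Complex.ofReal_sum]
    refine Finset.sum_congr rfl fun i _ => ?_
    rw [Complex.ofReal_mul,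
      show star (w i) * (((g i : ℝ):ℂ) * w i) = ((g i : ℝ):ℂ) * (w i * star (w i)) by ring,
      Complex.star_def, Complex.mul_conj]
  set S1 : ℝ := ∑ i, (Sum.elim ld ld i) * Complex.normSq (v i) with hS1
  set Q : ℝ := ∑ i, g i * Complex.normSq (w i) with hQ
  have hθR : θ' = S1 - 2 * Q := by
    have h := hθ'
    rw [hQC] at h
    have h2 : (∑ i, ((Sum.elim ld ld i : ℝ):ℂ) * ((Complex.normSq (v i) : ℝ):ℂ))
        = ((S1 : ℝ) : ℂ) := by rw [hS1]; push_cast; rfl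
    rw [h2] at h
    exact_mod_cast h
  -- bounds on g
  have hgub : ∀ i, g i ≤ 1/lp := by
    intro i
    rcases lt_trichotomy (μ i) 0 with h|h|h
    · have hneg : g i < 0 := div_neg_of_neg_of_pos h (hden i)
      have : (0:ℝ) < 1/lp := by positivity
      linarith
    · have hz : g i = 0 := by simp [hgdef, h]
      rw [hz]; positivity
    · have hpm := hp (μ i) (hmem i) h
      have := hden i
      rw [hgdef]
      rw [div_le_div_iff₀ (hden i) hlp]
      nlinarith [mul_le_mul_of_nonneg_left hpm (le_of_lt h), sq_nonneg k]
  have hglb : ∀ i, -(1/lm) ≤ g i := by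
    intro i
    rcases lt_trichotomy (μ i) 0 with h|h|h
    · have hmm := hm (μ i) (hmem i) h
      have hD := hden i
      have key : (-(μ i)) / (μ i ^ 2 + k ^ 2) ≤ 1/lm := by
        rw [div_le_div_iff₀ hD hlm]
        nlinarith [mul_le_mul_of_nonneg_left hmm (by linarith : (0:ℝ) ≤ -μ i), sq_nonneg k]
      have hre : g i = -((-(μ i)) / (μ i ^ 2 + k ^ 2)) := by rw [hgdef]; ring
      rw [hre]
      linarith
    · have hz : g i = 0 := by simp [hgdef, h]
      rw [hz]
      have : (0:ℝ) < 1/lm := by positivity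
      linarith
    · have hpos : 0 < g i := div_pos h (hden i)
      have : (0:ℝ) < 1/lm := by positivity
      linarith
  -- bounds on Q
  have hQub : Q ≤ 1/lp := by
    rw [hQ]
    calc ∑ i, g i * Complex.normSq (w i)
        ≤ ∑ i, (1/lp) * Complex.normSq (w i) :=
          Finset.sum_le_sum fun i _ =>
            mul_le_mul_of_nonneg_right (hgub i) (Complex.normSq_nonneg _)
      _ = 1/lp := by rw [← Finset.mul_sum, hw1, mul_one]
  have hQlb : -(1/lm) ≤ Q := by
    rw [hQ]
    calc -(1/lm) = ∑ i, (-(1/lm)) * Complex.normSq (w i) := by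
          rw [← Finset.mul_sum, hw1, mul_one]
      _ ≤ ∑ i, g i * Complex.normSq (w i) :=
          Finset.sum_le_sum fun i _ =>
            mul_le_mul_of_nonneg_right (hglb i) (Complex.normSq_nonneg _)
  -- bounds on S1
  have hld : ∀ i : Fin E ⊕ Fin E, lmin ≤ Sum.elim ld ld i ∧ Sum.elim ld ld i ≤ lmax := by
    intro i
    rcases i with j | j <;> exact ⟨hmin j, hmax j⟩
  have hS1lb : lmin ≤ S1 := by
    rw [hS1]
    calc lmin = ∑ i, lmin * Complex.normSq (v i) := by rw [← Finset.mul_sum, hv, mul_one]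
      _ ≤ ∑ i, (Sum.elim ld ld i) * Complex.normSq (v i) :=
          Finset.sum_le_sum fun i _ =>
            mul_le_mul_of_nonneg_right (hld i).1 (Complex.normSq_nonneg _)
  have hS1ub : S1 ≤ lmax := by
    rw [hS1]
    calc ∑ i, (Sum.elim ld ld i) * Complex.normSq (v i)
        ≤ ∑ i, lmax * Complex.normSq (v i) :=
          Finset.sum_le_sum fun i _ =>
            mul_le_mul_of_nonneg_right (hld i).2 (Complex.normSq_nonneg _)
      _ = lmax := by rw [← Finset.mul_sum, hv, mul_one]
  have h2lp : 2 * (1/lp) = 2/lp := by ring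
  have h2lm : 2 * (1/lm) = 2/lm := by ring
  refine ⟨⟨by rw [hθR]; linarith, by rw [hθR]; linarith⟩, fun hgt => by rw [hθR]; linarith⟩
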